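/- (Euler-Maclaurin in dimension one with rational endpoints) Let a₁ ≤ a₂ be rational numbers and let h be a polynomial. Then Σ_{x ∈ ℤ, a₁ ≤ x ≤ a₂} h(x) = ∫_{a₁}^{a₂} h(t) dt − Σ_{n≥0} (b(n+1, t₁)/(n+1)!) h^{(n)}(a₁) − Σ_{n≥0} (−1)^n (b(n+1, t₂)/(n+1)!) h^{(n)}(a₂), where t₁ = k₁ − a₁ with k₁ the smallest integer ≥ a₁, t₂ = a₂ − k₂ with k₂ the largest integer ≤ a₂ (so t₁, t₂ ∈ [0,1[), and b(n,t) are the Bernoulli polynomials defined by Σ_{n≥0} b(n,t)X^n/n! = e^{tX}X/(e^X−1). The sums over n are finite since h is a polynomial. -/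

import Mathlib

open MeasureTheory Filter Topology Set
open scoped RealInnerProductSpace Pointwise BigOperators

noncomputable section

/-- the ambient rational vector space: `ℝ^d` with the standard inner product, which is used
to identify `V` with its dual space `V^*`. -/
abbrev Vd (d : ℕ) := EuclideanSpace ℝ (Fin d)

variable {d : ℕ}

/-- the duality pairing `⟨ξ, x⟩` between `V^*` and `V`, realized by the standard inner
product of `ℝ^d`. -/
def pairE {d : ℕ} (ξ x : Vd d) : ℝ := @inner ℝ _ _ ξ x

/-- `Λ` is a lattice of its span: it is generated by finitely many `ℝ`-independent vectors. -/
def IsLatticeSub (Λ : AddSubgroup (Vd d)) : Prop :=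
  ∃ (k : ℕ) (v : Fin k → Vd d), LinearIndependent ℝ v ∧
    Λ = AddSubgroup.closure (Set.range v)

/-- `Λ` is a full-rank lattice in `ℝ^d`. -/
def IsFullLattice (Λ : AddSubgroup (Vd d)) : Prop :=
  IsLatticeSub Λ ∧ Submodule.span ℝ (Λ : Set (Vd d)) = ⊤

/-- `x` is a rational point with respect to the lattice `Λ`. -/
def IsRatPoint (Λ : AddSubgroup (Vd d)) (x : Vd d) : Prop :=
  ∃ q : ℤ, q ≠ 0 ∧ (q : ℝ) • x ∈ Λ

/-- viewing `φ ∈ V` as a linear functional via the standard pairing, it takes integer values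
on `Λ`, i.e. it belongs to the dual lattice. -/
def IsDualIntegral (Λ : AddSubgroup (Vd d)) (φ : Vd d) : Prop :=
  ∀ x ∈ Λ, ∃ n : ℤ, (pairE (φ) (x)) = (n : ℝ)

/-- a rational polyhedron (inside the span of `Λ`): a finite intersection of half-spaces
bounded by rational affine hyperplanes. -/
def IsRatPolyhedron (Λ : AddSubgroup (Vd d)) (P : Set (Vd d)) : Prop :=
  ∃ (n : ℕ) (φ : Fin n → Vd d) (c : Fin n → ℚ),
    (∀ i, IsDualIntegral Λ (φ i)) ∧
    P = {x | x ∈ Submodule.span ℝ (Λ : Set (Vd d)) ∧ ∀ i, (pairE (φ i) x) ≤ (c i : ℝ)}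

/-- the set `P` contains a straight (affine) line. -/
def ContainsLine (P : Set (Vd d)) : Prop :=
  ∃ x u : Vd d, u ≠ 0 ∧ ∀ t : ℝ, x + t • u ∈ P

/-- equality of meromorphic-type functions near `0`: they agree near `0` outside a closed
set with empty interior (the polar set). -/
def MeroEqAt0 (f g : Vd d → ℝ) : Prop :=
  ∃ Z : Set (Vd d), IsClosed Z ∧ interior Z = ∅ ∧
    ∀ᶠ ξ in 𝓝 (0 : Vd d), ξ ∉ Z → f ξ = g ξ

/-- `g` is analytic at `0` and its Taylor coefficients are rational with respect to an
integral basis (i.e. the coefficients take rational values on dual-lattice vectors). -/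
def HasRatSeriesAt0 (Λ : AddSubgroup (Vd d)) (g : Vd d → ℝ) : Prop :=
  ∃ p : FormalMultilinearSeries ℝ (Vd d) ℝ, HasFPowerSeriesAt g p 0 ∧
    ∀ (n : ℕ) (w : Fin n → Vd d), (∀ i, IsDualIntegral Λ (w i)) →
      ∃ q : ℚ, (p n) w = (q : ℝ)

/-- `f` is meromorphic near `0` with rational Taylor coefficients: near `0` it is a quotient
of two analytic functions with rational Taylor coefficients. -/
def RatMeromorphicAt0 (Λ : AddSubgroup (Vd d)) (f : Vd d → ℝ) : Prop :=
  ∃ g h : Vd d → ℝ, HasRatSeriesAt0 Λ g ∧ HasRatSeriesAt0 Λ h ∧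
    (¬ ∀ᶠ ξ in 𝓝 (0 : Vd d), h ξ = 0) ∧
    (∀ᶠ ξ in 𝓝 (0 : Vd d), h ξ ≠ 0 → f ξ * h ξ = g ξ)

/-- `m` is the canonical Lebesgue measure carried by the rational affine subspace `A`,
normalized so that a fundamental parallelepiped of the lattice `Λ ∩ lin(A)` has volume `1`:
it is the image of the standard Lebesgue measure under a `ℤ`-basis parametrization. -/
def IsCanonicalMeasure (Λ : AddSubgroup (Vd d)) (A : Set (Vd d)) (m : Measure (Vd d)) : Prop :=
  ∃ (k : ℕ) (x₀ : Vd d) (v : Fin k → Vd d),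
    x₀ ∈ A ∧ (∀ i, v i ∈ Λ) ∧ LinearIndependent ℝ v ∧
    A = {x | ∃ t : Fin k → ℝ, x = x₀ + ∑ i, t i • v i} ∧
    (∀ y ∈ Λ, y ∈ Submodule.span ℝ (Set.range v) →
      ∃ c : Fin k → ℤ, y = ∑ i, (c i : ℝ) • v i) ∧
    m = Measure.map (fun t : Fin k → ℝ => x₀ + ∑ i, t i • v i) volume

/-- the characterizing properties of the map `I`: it sends rational polyhedra to meromorphic
functions with rational coefficients, vanishes on polyhedra containing lines, and is given by
`∫_P e^{⟨ξ,x⟩} dm_{<P>}(x)` wherever this integral converges. -/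
def IsIMap (Λ : AddSubgroup (Vd d)) (I : Set (Vd d) → Vd d → ℝ) : Prop :=
  (∀ P, IsRatPolyhedron Λ P → RatMeromorphicAt0 Λ (I P)) ∧
  (∀ P, IsRatPolyhedron Λ P → ContainsLine P → ∀ ξ, I P ξ = 0) ∧
  (∀ P, IsRatPolyhedron Λ P → ∀ m : Measure (Vd d),
    IsCanonicalMeasure Λ ((affineSpan ℝ P : AffineSubspace ℝ (Vd d)) : Set (Vd d)) m →
    ∀ ξ : Vd d, IntegrableOn (fun x => Real.exp (pairE (ξ) (x))) P m →
      I P ξ = ∫ x in P, Real.exp (pairE (ξ) (x)) ∂m)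

/-- the characterizing properties of the map `S`: it sends rational polyhedra to meromorphic
functions with rational coefficients, vanishes on polyhedra containing lines, and is given by
`∑_{x ∈ P ∩ Λ} e^{⟨ξ,x⟩}` wherever this sum converges absolutely. -/
def IsSMap (Λ : AddSubgroup (Vd d)) (S : Set (Vd d) → Vd d → ℝ) : Prop :=
  (∀ P, IsRatPolyhedron Λ P → RatMeromorphicAt0 Λ (S P)) ∧
  (∀ P, IsRatPolyhedron Λ P → ContainsLine P → ∀ ξ, S P ξ = 0) ∧
  (∀ P, IsRatPolyhedron Λ P → ∀ ξ : Vd d,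
    Summable (fun x : ↥(P ∩ (Λ : Set (Vd d))) => Real.exp (pairE ξ (x : Vd d))) →
      S P ξ = ∑' x : ↥(P ∩ (Λ : Set (Vd d))), Real.exp (pairE ξ (x : Vd d)))

/-- `F` is a (nonempty, exposed) face of the convex set `P`. -/
def IsFaceOf (P F : Set (Vd d)) : Prop :=
  F.Nonempty ∧ ∃ φ : Vd d, F = {x ∈ P | ∀ y ∈ P, (pairE (φ) (y)) ≤ (pairE (φ) (x))}

/-- `v` is a vertex of `P`. -/
def IsVertexOf (P : Set (Vd d)) (v : Vd d) : Prop := IsFaceOf P {v}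

/-- the cone of feasible directions of `P` along the face `F` (computed at a point of the
relative interior of `F`). -/
def feasibleCone (P F : Set (Vd d)) : Set (Vd d) :=
  {u | ∃ x ∈ intrinsicInterior ℝ F, ∃ ε : ℝ, 0 < ε ∧ ∀ t : ℝ, 0 < t → t ≤ ε → x + t • u ∈ P}

/-- the supporting cone `<F> + c(P,F)` of `P` along its face `F`. -/
def suppCone (P F : Set (Vd d)) : Set (Vd d) :=
  {z | ∃ a ∈ (affineSpan ℝ F : Set (Vd d)), ∃ u ∈ feasibleCone P F, z = a + u}

/-- the recession cone (cone of directions) of a convex set. -/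
def recCone (P : Set (Vd d)) : Set (Vd d) :=
  {u | ∀ x ∈ P, ∀ t : ℝ, 0 ≤ t → x + t • u ∈ P}

/-- a rational affine cone with respect to the lattice `Λ`: a rational translate of a cone
generated by finitely many lattice vectors. -/
def IsRatAffineCone (Λ : AddSubgroup (Vd d)) (a : Set (Vd d)) : Prop :=
  ∃ (s : Vd d) (n : ℕ) (v : Fin n → Vd d), IsRatPoint Λ s ∧ (∀ i, v i ∈ Λ) ∧
    a = {x | ∃ t : Fin n → ℝ, (∀ i, 0 ≤ t i) ∧ x = s + ∑ i, t i • v i}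

/-- a rational (convex polyhedral) cone with vertex at the origin. -/
def IsRatCone (Λ : AddSubgroup (Vd d)) (c : Set (Vd d)) : Prop :=
  ∃ (n : ℕ) (v : Fin n → Vd d), (∀ i, v i ∈ Λ) ∧
    c = {x | ∃ t : Fin n → ℝ, (∀ i, 0 ≤ t i) ∧ x = ∑ i, t i • v i}

/-- `Q` is a rational scalar product: a symmetric positive definite bilinear form taking
rational values on lattice vectors. -/
def IsRatInner (Λ : AddSubgroup (Vd d)) (Q : Vd d →ₗ[ℝ] Vd d →ₗ[ℝ] ℝ) : Prop :=
  (∀ x y, Q x y = Q y x) ∧ (∀ x : Vd d, x ≠ 0 → 0 < Q x x) ∧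
  (∀ x ∈ Λ, ∀ y ∈ Λ, ∃ q : ℚ, Q x y = (q : ℝ))

/-- `π` realizes the quotient map `V → V/L` as the `Q`-orthogonal projection onto the
`Q`-orthogonal complement of `L`. -/
def IsQCoproj (Q : Vd d →ₗ[ℝ] Vd d →ₗ[ℝ] ℝ) (L : Submodule ℝ (Vd d))
    (π : Vd d →ₗ[ℝ] Vd d) : Prop :=
  (∀ x, x - π x ∈ L) ∧ (∀ x : Vd d, ∀ y ∈ L, Q (π x) y = 0)

/-- `Λ'` is the lattice of a rational quotient space of `(V, Λ)`, realized inside `V` via the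
`Q`-orthogonal projection along a rational subspace. -/
def IsQuotLattice (Q : Vd d →ₗ[ℝ] Vd d →ₗ[ℝ] ℝ) (Λ Λ' : AddSubgroup (Vd d)) : Prop :=
  ∃ (L : Submodule ℝ (Vd d)) (π : Vd d →ₗ[ℝ] Vd d),
    Submodule.span ℝ ((L : Set (Vd d)) ∩ (Λ : Set (Vd d))) = L ∧
    IsQCoproj Q L π ∧ Λ' = AddSubgroup.map π.toAddMonoidHom Λ

/-- a family of maps `I` indexed by the rational quotient spaces of `(V,Λ)`, each member
satisfying the characterizing properties of the integral generating function. -/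
def IsIFamily (Q : Vd d →ₗ[ℝ] Vd d →ₗ[ℝ] ℝ) (Λ : AddSubgroup (Vd d))
    (I : AddSubgroup (Vd d) → Set (Vd d) → Vd d → ℝ) : Prop :=
  ∀ Λ', IsQuotLattice Q Λ Λ' → IsIMap Λ' (I Λ')

/-- a family of maps `S` indexed by the rational quotient spaces of `(V,Λ)`, each member
satisfying the characterizing properties of the lattice-point generating function. -/
def IsSFamily (Q : Vd d →ₗ[ℝ] Vd d →ₗ[ℝ] ℝ) (Λ : AddSubgroup (Vd d))
    (S : AddSubgroup (Vd d) → Set (Vd d) → Vd d → ℝ) : Prop :=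
  ∀ Λ', IsQuotLattice Q Λ Λ' → IsSMap Λ' (S Λ')

/-- the defining properties (a),(b),(c) of the family `μ` of Berline--Vergne:
each `μ(a)` is meromorphic with rational coefficients near `0`, `μ_{0}({0}) = 1`, and for
every pointed rational affine cone `a` in a rational quotient `W` of `V` one has
`S(a) = ∑_{f ∈ F(a)} μ(t(a,f)) I(f)`, where the transverse cone `t(a,f)` is realized inside
`V` by the `Q`-orthogonal projection `π F` along `lin(f)`, and functions on quotient duals
are extended by `Q`-orthogonal projection. -/
def IsMuCore (Λ : AddSubgroup (Vd d)) (Q : Vd d →ₗ[ℝ] Vd d →ₗ[ℝ] ℝ)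
    (I S μ : AddSubgroup (Vd d) → Set (Vd d) → Vd d → ℝ) : Prop :=
  (∀ Λ', IsQuotLattice Q Λ Λ' → ∀ a, IsRatAffineCone Λ' a → ¬ ContainsLine a →
      RatMeromorphicAt0 Λ' (μ Λ' a)) ∧
  (∀ ξ, μ ⊥ ({0} : Set (Vd d)) ξ = 1) ∧
  (∀ Λ', IsQuotLattice Q Λ Λ' → ∀ a, IsRatAffineCone Λ' a → ¬ ContainsLine a →
    ∀ π : Set (Vd d) → (Vd d →ₗ[ℝ] Vd d),
      (∀ F, IsFaceOf a F → IsQCoproj Q (affineSpan ℝ F).direction (π F)) →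
      MeroEqAt0 (S Λ' a)
        (fun ξ => ∑ᶠ F ∈ {F | IsFaceOf a F},
          μ (AddSubgroup.map (π F).toAddMonoidHom Λ') ((π F) '' suppCone a F) ξ
            * I Λ' F ξ))

/-- the family `μ`, extended by `μ(a) = 0` on cones containing a straight line. -/
def IsMuFamily (Λ : AddSubgroup (Vd d)) (Q : Vd d →ₗ[ℝ] Vd d →ₗ[ℝ] ℝ)
    (I S μ : AddSubgroup (Vd d) → Set (Vd d) → Vd d → ℝ) : Prop :=
  IsMuCore Λ Q I S μ ∧
  (∀ Λ', IsQuotLattice Q Λ Λ' → ∀ a, IsRatAffineCone Λ' a → ContainsLine a →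
    ∀ ξ, μ Λ' a ξ = 0)

/-- the trace pairing of two `n`-multilinear forms on `ℝ^d`, computed in the standard basis. -/
def multiPair {n : ℕ} (p q : ContinuousMultilinearMap ℝ (fun _ : Fin n => Vd d) ℝ) : ℝ :=
  ∑ ι : Fin n → Fin d,
    p (fun j => (EuclideanSpace.basisFun (Fin d) ℝ) (ι j)) *
    q (fun j => (EuclideanSpace.basisFun (Fin d) ℝ) (ι j))

/-- the action on `h` of the infinite-order constant-coefficient differential operator whose
symbol has Taylor series `p` at `0`; on polynomials `h` the sum is finite.  Its defining
property is `D(Φ)e^{⟨ξ,·⟩} = Φ(ξ)e^{⟨ξ,·⟩}`. -/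
def DOp (p : FormalMultilinearSeries ℝ (Vd d) ℝ) (h : Vd d → ℝ) (x : Vd d) : ℝ :=
  ∑ᶠ n : ℕ, multiPair (p n) (iteratedFDeriv ℝ n h x)

/-- `h` is a polynomial function on `ℝ^d`. -/
def IsPolyFun (h : Vd d → ℝ) : Prop :=
  ∃ p : MvPolynomial (Fin d) ℝ, ∀ x : Vd d, h x = MvPolynomial.eval (fun i => x i) p

/-- `h` is a polynomial function of degree at most `r` on `ℝ^d`. -/
def IsPolyFunOfDeg (h : Vd d → ℝ) (r : ℕ) : Prop :=
  ∃ p : MvPolynomial (Fin d) ℝ, p.totalDegree ≤ r ∧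
    ∀ x : Vd d, h x = MvPolynomial.eval (fun i => x i) p

end

section EulerMaclaurinHelpers
open Polynomial Finset

noncomputable def Bp (n : ℕ) : Polynomial ℝ := (Polynomial.bernoulli n).map (algebraMap ℚ ℝ)

lemma Bp_eval (n : ℕ) (q : ℚ) : (Bp n).eval (q : ℝ) = ((Polynomial.bernoulli n).eval q : ℚ) := by
  rw [Bp, show ((q : ℝ)) = algebraMap ℚ ℝ q from (eq_ratCast _ q).symm, Polynomial.eval_map,
    Polynomial.eval₂_at_apply, eq_ratCast]

lemma Bp_zero : Bp 0 = 1 := by simp [Bp]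

lemma derivative_Bp (n : ℕ) : derivative (Bp (n+1)) = (n+1 : ℝ[X]) * Bp n := by
  rw [Bp, Polynomial.derivative_map, Polynomial.derivative_bernoulli_add_one, Polynomial.map_mul]
  norm_num [Bp]

noncomputable def Hp (h : Polynomial ℝ) : Polynomial ℝ :=
  ∑ n ∈ range (h.natDegree + 1), C (h.coeff n / (n+1)) * X^(n+1)

lemma derivative_Hp (h : Polynomial ℝ) : derivative (Hp h) = h := by
  conv_rhs => rw [h.as_sum_range' (h.natDegree + 1) (Nat.lt_succ_self _)]
  rw [Hp, derivative_sum]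
  refine Finset.sum_congr rfl fun n _ => ?_
  rw [derivative_C_mul, derivative_X_pow]
  rw [Nat.add_sub_cancel, ← mul_assoc, ← C_mul, Nat.cast_add, Nat.cast_one,
    div_mul_cancel₀ _ (by positivity : ((n:ℝ)+1) ≠ 0), C_mul_X_pow_eq_monomial]

noncomputable def Dh (h : Polynomial ℝ) (n : ℕ) : Polynomial ℝ := (fun p => derivative p)^[n] h

lemma Dh_succ (h : Polynomial ℝ) (n : ℕ) : Dh h (n+1) = derivative (Dh h n) :=
  Function.iterate_succ_apply' _ _ _

lemma Dh_top (h : Polynomial ℝ) : Dh h (h.natDegree + 1) = 0 :=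
  Polynomial.iterate_derivative_eq_zero (Nat.lt_succ_self _)

noncomputable def Fφ (h : Polynomial ℝ) (c t : ℝ) : ℝ :=
  ∑ n ∈ range (h.natDegree + 1), (Bp (n+1)).eval t * (Dh h n).eval (c - t) / (n+1).factorial

noncomputable def Fψ (h : Polynomial ℝ) (c t : ℝ) : ℝ :=
  ∑ n ∈ range (h.natDegree + 1),
    (-1:ℝ)^n * ((Bp (n+1)).eval t * (Dh h n).eval (c + t) / (n+1).factorial)

lemma hasDerivAt_Bp (n : ℕ) (t : ℝ) :
    HasDerivAt (fun t : ℝ => (Bp (n+1)).eval t) (((n:ℝ)+1) * (Bp n).eval t) t := by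
  simpa [derivative_Bp] using (Bp (n+1)).hasDerivAt t

lemma hasDerivAt_Fφ (h : Polynomial ℝ) (c t : ℝ) :
    HasDerivAt (fun t => Fφ h c t) (h.eval (c - t)) t := by
  set G : ℕ → ℝ := fun m => (Bp m).eval t * (Dh h m).eval (c - t) / m.factorial with hG
  have key : ∀ n ∈ range (h.natDegree + 1),
      HasDerivAt (fun t => (Bp (n+1)).eval t * (Dh h n).eval (c - t) / (n+1).factorial)
        (G n - G (n+1)) t := by
    intro n _
    have h1 := hasDerivAt_Bp n t
    have hc : HasDerivAt (fun t : ℝ => c - t) (-1) t := (hasDerivAt_id t).const_sub c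
    have h2 : HasDerivAt (fun t : ℝ => (Dh h n).eval (c - t))
        (-(Dh h (n+1)).eval (c - t)) t := by
      have := HasDerivAt.comp t ((Dh h n).hasDerivAt (c - t)) hc
      simpa [Dh_succ, Function.comp_def] using this
    have := (h1.mul h2).div_const ((n+1).factorial : ℝ)
    refine this.congr_deriv ?_; symm
    rw [hG]
    have hfac : ((n+1).factorial : ℝ) = ((n:ℝ)+1) * n.factorial := by
      rw [Nat.factorial_succ]; push_cast; ring
    have hnn : (n.factorial : ℝ) ≠ 0 := by positivity
    have hnn1 : ((n+1).factorial : ℝ) ≠ 0 := by positivity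
    beta_reduce; rw [hfac]
    field_simp [hfac]
    ring
  have hsum := HasDerivAt.fun_sum key
  rw [Finset.sum_range_sub'] at hsum
  have hz : G (h.natDegree + 1) = 0 := by simp [hG, Dh_top]
  have h0 : G 0 = h.eval (c - t) := by simp [hG, Bp_zero, Dh]
  rw [hz, h0, sub_zero] at hsum
  exact hsum

lemma hasDerivAt_Fψ (h : Polynomial ℝ) (c t : ℝ) :
    HasDerivAt (fun t => Fψ h c t) (h.eval (c + t)) t := by
  set G : ℕ → ℝ := fun m => (-1:ℝ)^m * ((Bp m).eval t * (Dh h m).eval (c + t) / m.factorial)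
    with hG
  have key : ∀ n ∈ range (h.natDegree + 1),
      HasDerivAt (fun t => (-1:ℝ)^n *
          ((Bp (n+1)).eval t * (Dh h n).eval (c + t) / (n+1).factorial))
        (G n - G (n+1)) t := by
    intro n _
    have h1 := hasDerivAt_Bp n t
    have hc : HasDerivAt (fun t : ℝ => c + t) 1 t := (hasDerivAt_id t).const_add c
    have h2 : HasDerivAt (fun t : ℝ => (Dh h n).eval (c + t))
        ((Dh h (n+1)).eval (c + t)) t := by
      have := HasDerivAt.comp t ((Dh h n).hasDerivAt (c + t)) hc
      simpa [Dh_succ, Function.comp_def] using this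
    have := ((h1.mul h2).div_const ((n+1).factorial : ℝ)).const_mul ((-1:ℝ)^n)
    refine this.congr_deriv ?_; symm
    rw [hG]
    have hfac : ((n+1).factorial : ℝ) = ((n:ℝ)+1) * n.factorial := by
      rw [Nat.factorial_succ]; push_cast; ring
    have hnn : (n.factorial : ℝ) ≠ 0 := by positivity
    have hnn1 : ((n+1).factorial : ℝ) ≠ 0 := by positivity
    beta_reduce; rw [hfac]
    field_simp [hfac, pow_succ]
    ring
  have hsum := HasDerivAt.fun_sum key
  rw [Finset.sum_range_sub'] at hsum
  have hz : G (h.natDegree + 1) = 0 := by simp [hG, Dh_top]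
  have h0 : G 0 = h.eval (c + t) := by simp [hG, Bp_zero, Dh]
  rw [hz, h0, sub_zero] at hsum
  exact hsum

lemma Fφ_eq (h : Polynomial ℝ) (c t : ℝ) :
    Fφ h c t = Fφ h c 0 + (Hp h).eval c - (Hp h).eval (c - t) := by
  have key : ∀ s : ℝ, HasDerivAt (fun t => Fφ h c t + (Hp h).eval (c - t)) 0 s := by
    intro s
    have hc : HasDerivAt (fun t : ℝ => c - t) (-1) s := (hasDerivAt_id s).const_sub c
    have h2 : HasDerivAt (fun t : ℝ => (Hp h).eval (c - t)) (-(h.eval (c - s))) s := by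
      have := HasDerivAt.comp s ((Hp h).hasDerivAt (c - s)) hc
      simpa [derivative_Hp, Function.comp_def] using this
    simpa using (hasDerivAt_Fφ h c s).fun_add h2
  have hconst := is_const_of_deriv_eq_zero
    (fun s => (key s).differentiableAt) (fun s => (key s).deriv) t 0
  simp only [sub_zero] at hconst
  linarith [hconst]

lemma Fψ_eq (h : Polynomial ℝ) (c t : ℝ) :
    Fψ h c t = Fψ h c 0 + (Hp h).eval (c + t) - (Hp h).eval c := by
  have key : ∀ s : ℝ, HasDerivAt (fun t => Fψ h c t - (Hp h).eval (c + t)) 0 s := by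
    intro s
    have hc : HasDerivAt (fun t : ℝ => c + t) 1 s := (hasDerivAt_id s).const_add c
    have h2 : HasDerivAt (fun t : ℝ => (Hp h).eval (c + t)) (h.eval (c + s)) s := by
      have := HasDerivAt.comp s ((Hp h).hasDerivAt (c + s)) hc
      simpa [derivative_Hp, Function.comp_def] using this
    simpa using (hasDerivAt_Fψ h c s).fun_sub h2
  have hconst := is_const_of_deriv_eq_zero
    (fun s => (key s).differentiableAt) (fun s => (key s).deriv) t 0
  simp only [add_zero] at hconst
  linarith [hconst]

lemma step_eq (h : Polynomial ℝ) (c : ℝ) : Fφ h (c+1) 1 = Fφ h c 0 + h.eval c := by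
  have : Fφ h (c+1) 1 - Fφ h c 0 = h.eval c := by
    rw [Fφ, Fφ, ← Finset.sum_sub_distrib]
    have : ∀ n ∈ range (h.natDegree + 1),
        (Bp (n+1)).eval 1 * (Dh h n).eval (c + 1 - 1) / (n+1).factorial
          - (Bp (n+1)).eval 0 * (Dh h n).eval (c - 0) / (n+1).factorial
        = if n = 0 then h.eval c else 0 := by
      intro n _
      rcases Nat.eq_zero_or_pos n with rfl | hn
      · have e1 : (Bp 1).eval 1 = (1:ℝ)/2 := by
          rw [show (1:ℝ) = ((1:ℚ):ℝ) by norm_num, Bp_eval]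
          rw [Polynomial.bernoulli_eval_one, bernoulli'_one]; norm_num
        have e0 : (Bp 1).eval 0 = -(1:ℝ)/2 := by
          rw [show (0:ℝ) = ((0:ℚ):ℝ) by norm_num, Bp_eval]
          rw [Polynomial.bernoulli_eval_zero, _root_.bernoulli_one]; norm_num
        simp [e1, e0, Dh]
        ring
      · have e : (Bp (n+1)).eval 1 = (Bp (n+1)).eval 0 := by
          rw [show (1:ℝ) = ((1:ℚ):ℝ) by norm_num, show (0:ℝ) = ((0:ℚ):ℝ) by norm_num,
            Bp_eval, Bp_eval, Polynomial.bernoulli_eval_one, Polynomial.bernoulli_eval_zero,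
            bernoulli_eq_bernoulli'_of_ne_one (by omega)]
        rw [e, if_neg (by omega)]
        ring_nf
    rw [Finset.sum_congr rfl this, Finset.sum_ite_eq' (range (h.natDegree + 1)) 0]
    simp
  linarith

lemma psi_phi (h : Polynomial ℝ) (c : ℝ) : Fψ h c 0 + Fφ h c 0 = -h.eval c := by
  rw [Fψ, Fφ, ← Finset.sum_add_distrib]
  have : ∀ n ∈ range (h.natDegree + 1),
      (-1:ℝ)^n * ((Bp (n+1)).eval 0 * (Dh h n).eval (c + 0) / (n+1).factorial)
        + (Bp (n+1)).eval 0 * (Dh h n).eval (c - 0) / (n+1).factorial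
      = if n = 0 then -h.eval c else 0 := by
    intro n _
    rcases Nat.eq_zero_or_pos n with rfl | hn
    · have e0 : (Bp 1).eval 0 = -(1:ℝ)/2 := by
        rw [show (0:ℝ) = ((0:ℚ):ℝ) by norm_num, Bp_eval]
        rw [Polynomial.bernoulli_eval_zero, _root_.bernoulli_one]; norm_num
      simp [e0, Dh]
      ring
    · rw [if_neg (by omega)]
      rcases Nat.even_or_odd n with he | ho
      · have e0 : (Bp (n+1)).eval 0 = 0 := by
          rw [show (0:ℝ) = ((0:ℚ):ℝ) by norm_num, Bp_eval, Polynomial.bernoulli_eval_zero,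
            bernoulli_eq_bernoulli'_of_ne_one (by omega),
            bernoulli'_eq_zero_of_odd (he.add_one) (by omega)]
        rw [e0]; ring
      · simp only [Odd.neg_one_pow ho, add_zero, sub_zero]; ring
  rw [Finset.sum_congr rfl this, Finset.sum_ite_eq' (range (h.natDegree + 1)) 0]
  simp

lemma ftc (h : Polynomial ℝ) (x y : ℝ) :
    ∫ t in x..y, h.eval t = (Hp h).eval y - (Hp h).eval x := by
  have hint : IntervalIntegrable (fun t => h.eval t) MeasureTheory.volume x y :=
    (h.continuous).intervalIntegrable _ _
  have hd : ∀ s ∈ Set.uIcc x y, HasDerivAt (fun u => (Hp h).eval u) (h.eval s) s := fun s _ => by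
    simpa [derivative_Hp] using (Hp h).hasDerivAt s
  exact intervalIntegral.integral_eq_sub_of_hasDerivAt hd hint

lemma one_step (h : Polynomial ℝ) (c : ℝ) :
    (Hp h).eval (c+1) + Fφ h (c+1) 0 = (Hp h).eval c + Fφ h c 0 + h.eval c := by
  have h1 := step_eq h c
  have h2 := Fφ_eq h (c+1) 1
  simp only [add_sub_cancel_right] at h2
  linarith

lemma telescope (h : Polynomial ℝ) (k : ℤ) : ∀ K : ℤ, k ≤ K →
    ∑ x ∈ Finset.Ico k K, h.eval (x:ℝ)
      = (Hp h).eval (K:ℝ) - (Hp h).eval (k:ℝ) + Fφ h (K:ℝ) 0 - Fφ h (k:ℝ) 0 := by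
  refine Int.le_induction ?_ ?_
  · simp
  · intro K hK ih
    have hins : Finset.Ico k (K + 1) = insert K (Finset.Ico k K) := by
      ext x; simp; omega
    rw [hins, Finset.sum_insert (by simp), ih]
    have := one_step h (K : ℝ)
    push_cast
    linarith

lemma support_sub (h : Polynomial ℝ) (f : ℕ → ℝ)
    (hf : ∀ n, h.natDegree < n → f n = 0) :
    Function.support f ⊆ ↑(range (h.natDegree + 1)) := by
  intro n hn
  simp only [Function.mem_support] at hn
  simp only [Finset.coe_range, Set.mem_Iio]
  by_contra hmem
  exact hn (hf n (by omega))

lemma finsum_to_Fφ (h : Polynomial ℝ) (q : ℚ) (x : ℝ) :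
    ∑ᶠ n : ℕ, ((Polynomial.eval q (Polynomial.bernoulli (n + 1)) /
        (Nat.factorial (n + 1) : ℚ) : ℚ) : ℝ) *
        Polynomial.eval x ((fun p => Polynomial.derivative p)^[n] h)
      = Fφ h (x + (q:ℝ)) (q:ℝ) := by
  rw [finsum_eq_sum_of_support_subset _ (support_sub h _ (fun n hn => by
    rw [show (fun p => Polynomial.derivative p)^[n] h = 0 from
      Polynomial.iterate_derivative_eq_zero hn]; simp))]
  rw [Fφ]
  refine Finset.sum_congr rfl fun n _ => ?_
  rw [Rat.cast_div, ← Bp_eval, show x + (q:ℝ) - (q:ℝ) = x by ring]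
  show _ = _ * Polynomial.eval x (Dh h n) / _
  rw [Dh]
  push_cast
  ring

lemma finsum_to_Fψ (h : Polynomial ℝ) (q : ℚ) (x : ℝ) :
    ∑ᶠ n : ℕ, (-1 : ℝ) ^ n * ((Polynomial.eval q (Polynomial.bernoulli (n + 1)) /
        (Nat.factorial (n + 1) : ℚ) : ℚ) : ℝ) *
        Polynomial.eval x ((fun p => Polynomial.derivative p)^[n] h)
      = Fψ h (x - (q:ℝ)) (q:ℝ) := by
  rw [finsum_eq_sum_of_support_subset _ (support_sub h _ (fun n hn => by
    rw [show (fun p => Polynomial.derivative p)^[n] h = 0 from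
      Polynomial.iterate_derivative_eq_zero hn]; simp))]
  rw [Fψ]
  refine Finset.sum_congr rfl fun n _ => ?_
  rw [Rat.cast_div, ← Bp_eval, show x - (q:ℝ) + (q:ℝ) = x by ring]
  show _ = (-1:ℝ)^n * (_ * Polynomial.eval x (Dh h n) / _)
  rw [Dh]
  push_cast
  ring


end EulerMaclaurinHelpers

/-- Euler–Maclaurin in dimension one with rational endpoints: for rational
`a₁ ≤ a₂` and a polynomial `h`,
`∑_{x ∈ ℤ, a₁ ≤ x ≤ a₂} h(x) = ∫_{a₁}^{a₂} h − ∑_{n≥0} b(n+1,t₁)/(n+1)! · h⁽ⁿ⁾(a₁)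
− ∑_{n≥0} (−1)ⁿ b(n+1,t₂)/(n+1)! · h⁽ⁿ⁾(a₂)`, with `t₁ = ⌈a₁⌉ − a₁`, `t₂ = a₂ − ⌊a₂⌋`,
and `b(n,t)` the Bernoulli polynomials; the sums are finite since `h` is a polynomial. -/
theorem statement16 (a₁ a₂ : ℚ) (hle : a₁ ≤ a₂) (h : Polynomial ℝ) :
    ∑ x ∈ Finset.Icc ⌈a₁⌉ ⌊a₂⌋, Polynomial.eval (x : ℝ) h
      = (∫ t in (a₁ : ℝ)..(a₂ : ℝ), Polynomial.eval t h)
        - ∑ᶠ n : ℕ,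
            ((Polynomial.eval ((⌈a₁⌉ : ℚ) - a₁) (Polynomial.bernoulli (n + 1)) /
              (Nat.factorial (n + 1) : ℚ) : ℚ) : ℝ) *
            Polynomial.eval (a₁ : ℝ) ((fun p => Polynomial.derivative p)^[n] h)
        - ∑ᶠ n : ℕ, (-1 : ℝ) ^ n *
            ((Polynomial.eval (a₂ - (⌊a₂⌋ : ℚ)) (Polynomial.bernoulli (n + 1)) /
              (Nat.factorial (n + 1) : ℚ) : ℚ) : ℝ) *
            Polynomial.eval (a₂ : ℝ) ((fun p => Polynomial.derivative p)^[n] h) := by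
  have hceil : ⌈a₁⌉ ≤ ⌊a₂⌋ + 1 := by
    refine Int.ceil_le.mpr (le_of_lt (lt_of_le_of_lt hle ?_))
    exact_mod_cast Int.lt_floor_add_one a₂
  -- rewrite the finsums
  rw [finsum_to_Fφ h ((⌈a₁⌉ : ℚ) - a₁) (a₁ : ℝ), finsum_to_Fψ h (a₂ - (⌊a₂⌋ : ℚ)) (a₂ : ℝ)]
  have hc1 : (a₁ : ℝ) + (((⌈a₁⌉ : ℚ) - a₁ : ℚ) : ℝ) = ((⌈a₁⌉ : ℤ) : ℝ) := by push_cast; ring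
  have hc2 : (a₂ : ℝ) - ((a₂ - (⌊a₂⌋ : ℚ) : ℚ) : ℝ) = ((⌊a₂⌋ : ℤ) : ℝ) := by push_cast; ring
  rw [hc1, hc2, ftc]
  have e1 := Fφ_eq h ((⌈a₁⌉ : ℤ) : ℝ) (((⌈a₁⌉ : ℚ) - a₁ : ℚ) : ℝ)
  have e2 := Fψ_eq h ((⌊a₂⌋ : ℤ) : ℝ) ((a₂ - (⌊a₂⌋ : ℚ) : ℚ) : ℝ)
  have hp1 : ((⌈a₁⌉ : ℤ) : ℝ) - (((⌈a₁⌉ : ℚ) - a₁ : ℚ) : ℝ) = (a₁ : ℝ) := by push_cast; ring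
  have hp2 : ((⌊a₂⌋ : ℤ) : ℝ) + ((a₂ - (⌊a₂⌋ : ℚ) : ℚ) : ℝ) = (a₂ : ℝ) := by push_cast; ring
  rw [hp1] at e1
  rw [hp2] at e2
  have e3 := psi_phi h ((⌊a₂⌋ : ℤ) : ℝ)
  have e4 := one_step h ((⌊a₂⌋ : ℤ) : ℝ)
  have e5 := telescope h ⌈a₁⌉ (⌊a₂⌋ + 1) hceil
  have hIcc : Finset.Icc ⌈a₁⌉ ⌊a₂⌋ = Finset.Ico ⌈a₁⌉ (⌊a₂⌋ + 1) := by
    ext x; simp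
  rw [hIcc, e5]
  push_cast at e1 e2 e3 e4 e5 ⊢
  linarith
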